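/- For each integer m ≥ 1 and R > 0, define ξ_m(R) = m² (tanh(R/2))^{2m} / ( sinh R · ∫₀^R (tanh(r/2))^{2m} sinh r dr ). Then the function R ↦ ξ_m(R) · sinh³(R/2) is strictly decreasing on (0, +∞). -/

import Mathlib

open Real Set

noncomputable def XiI (n : ℕ) (R : ℝ) : ℝ :=
  ∫ r in (0:ℝ)..R, Real.tanh (r/2)^(2*n+2) * Real.sinh r

lemma xi_cont (n : ℕ) : Continuous (fun r : ℝ => Real.tanh (r/2)^(2*n+2) * Real.sinh r) := by
  simp only [Real.tanh_eq_sinh_div_cosh]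
  have h : Continuous fun r : ℝ => r/2 := continuous_id.div_const 2
  exact (((Real.continuous_sinh.comp h).div (Real.continuous_cosh.comp h)
    (fun x => (Real.cosh_pos _).ne')).pow _).mul Real.continuous_sinh

lemma XiI_hasDerivAt (n : ℕ) (R : ℝ) :
    HasDerivAt (XiI n) (Real.tanh (R/2)^(2*n+2) * Real.sinh R) R :=
  intervalIntegral.integral_hasDerivAt_right ((xi_cont n).intervalIntegrable _ _)
    ((xi_cont n).stronglyMeasurableAtFilter _ _) (xi_cont n).continuousAt

lemma XiI_zero (n : ℕ) : XiI n 0 = 0 :=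
  intervalIntegral.integral_same

lemma XiI_pos (n : ℕ) {R : ℝ} (hR : 0 < R) : 0 < XiI n R := by
  refine intervalIntegral.intervalIntegral_pos_of_pos_on
    ((xi_cont n).intervalIntegrable _ _) ?_ hR
  intro x hx
  have h1 : 0 < Real.sinh x := Real.sinh_pos_iff.2 hx.1
  have h2 : 0 < Real.tanh (x/2) := by
    rw [Real.tanh_eq_sinh_div_cosh]
    exact div_pos (Real.sinh_pos_iff.2 (by linarith [hx.1])) (Real.cosh_pos _)
  positivity

lemma hasDerivAt_sinh_half (x : ℝ) :
    HasDerivAt (fun y : ℝ => Real.sinh (y/2)) (Real.cosh (x/2) / 2) x := by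
  have h := (Real.hasDerivAt_sinh (x/2)).comp x ((hasDerivAt_id x).div_const 2)
  refine h.congr_deriv ?_
  ring

lemma hasDerivAt_cosh_half (x : ℝ) :
    HasDerivAt (fun y : ℝ => Real.cosh (y/2)) (Real.sinh (x/2) / 2) x := by
  have h := (Real.hasDerivAt_cosh (x/2)).comp x ((hasDerivAt_id x).div_const 2)
  refine h.congr_deriv ?_
  ring

lemma xi_sinh_eq (x : ℝ) :
    Real.sinh x = 2 * Real.sinh (x/2) * Real.cosh (x/2) := by
  rw [← Real.sinh_two_mul]; congr 1; ring

lemma xi_integrand_eq (n : ℕ) (x : ℝ) :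
    Real.tanh (x/2)^(2*n+2) * Real.sinh x
      = 2 * Real.sinh (x/2)^(2*n+3) * Real.cosh (x/2) / Real.cosh (x/2)^(2*n+2) := by
  have hc := (Real.cosh_pos (x/2)).ne'
  rw [Real.tanh_eq_sinh_div_cosh, xi_sinh_eq x, div_pow]
  field_simp
  ring

lemma XiD_hasDerivAt (n : ℕ) (x : ℝ) :
    HasDerivAt (fun y : ℝ =>
        6 * Real.sinh (y/2)^(2*n+4) / Real.cosh (y/2)^(2*n+2) - XiI n y)
      (Real.sinh (x/2)^(2*n+3) * Real.cosh (x/2)^(2*n+1) *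
          ((6*n+10) * Real.cosh (x/2)^2 - (6*n+6) * Real.sinh (x/2)^2)
        / (Real.cosh (x/2)^(2*n+2))^2) x := by
  have hc := Real.cosh_pos (x/2)
  have h1 := ((hasDerivAt_sinh_half x).pow (2*n+4)).const_mul (6:ℝ)
  have h2 := (hasDerivAt_cosh_half x).pow (2*n+2)
  refine ((h1.div h2 (pow_ne_zero _ hc.ne')).sub (XiI_hasDerivAt n x)).congr_deriv ?_
  simp only [Pi.pow_apply, Pi.mul_apply]
  rw [xi_integrand_eq]
  simp only [show 2*n+4-1 = 2*n+3 from by omega, show 2*n+2-1 = 2*n+1 from by omega]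
  push_cast
  field_simp
  ring

lemma XiI_lt (n : ℕ) {R : ℝ} (hR : 0 < R) :
    XiI n R < 6 * Real.sinh (R/2)^(2*n+4) / Real.cosh (R/2)^(2*n+2) := by
  have hmono : StrictMonoOn (fun y : ℝ =>
      6 * Real.sinh (y/2)^(2*n+4) / Real.cosh (y/2)^(2*n+2) - XiI n y) (Ici 0) := by
    refine strictMonoOn_of_deriv_pos (convex_Ici 0)
      (fun x _ => ((XiD_hasDerivAt n x).differentiableAt.continuousAt).continuousWithinAt) ?_
    rw [interior_Ici]
    intro x hx
    rw [(XiD_hasDerivAt n x).deriv]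
    have hs : 0 < Real.sinh (x/2) := Real.sinh_pos_iff.2 (by simpa using half_pos (show (0:ℝ) < x from hx))
    have hc : 0 < Real.cosh (x/2) := Real.cosh_pos _
    have hb : 0 < (6*(n:ℝ)+10) * Real.cosh (x/2)^2 - (6*n+6) * Real.sinh (x/2)^2 := by
      nlinarith [Real.cosh_sq (x/2), sq_nonneg (Real.sinh (x/2))]
    have h1 : 0 < Real.sinh (x/2)^(2*n+3) * Real.cosh (x/2)^(2*n+1) := by positivity
    exact div_pos (mul_pos h1 hb) (by positivity)
  have h := hmono (self_mem_Ici) (le_of_lt hR) hR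
  have h0 : (6:ℝ) * Real.sinh ((0:ℝ)/2)^(2*n+4) / Real.cosh ((0:ℝ)/2)^(2*n+2) - XiI n 0 = 0 := by
    rw [XiI_zero]
    norm_num [zero_pow (show 2*n+4 ≠ 0 by omega)]
  simp only at h
  rw [h0] at h
  linarith


lemma XiJ_hasDerivAt (n : ℕ) (x : ℝ) :
    HasDerivAt (fun y : ℝ =>
        2 * Real.sinh (y/2)^(2*n+4) * Real.cosh (y/2)^2 / Real.cosh (y/2)^(2*n+2)
          - ((n:ℝ)+2 + Real.sinh (y/2)^2/2) * XiI n y)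
      (Real.sinh (x/2)^(2*n+3) * Real.cosh (x/2)^(2*n+3) *
          ((2*(n:ℝ)+4) * Real.cosh (x/2)^2 - (2*(n:ℝ)+1) * Real.sinh (x/2)^2 - (2*(n:ℝ)+4))
        / (Real.cosh (x/2)^(2*n+2))^2
        - Real.sinh (x/2) * Real.cosh (x/2) / 2 * XiI n x) x := by
  have hc := Real.cosh_pos (x/2)
  have h1 := (((hasDerivAt_sinh_half x).pow (2*n+4)).const_mul (2:ℝ)).mul
    ((hasDerivAt_cosh_half x).pow 2)
  have h2 := (hasDerivAt_cosh_half x).pow (2*n+2)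
  have h3 := ((((hasDerivAt_sinh_half x).pow 2).div_const 2).const_add ((n:ℝ)+2)).mul
    (XiI_hasDerivAt n x)
  refine ((h1.div h2 (pow_ne_zero _ hc.ne')).sub h3).congr_deriv ?_
  simp only [Pi.pow_apply, Pi.mul_apply]
  rw [xi_integrand_eq]
  simp only [show 2*n+4-1 = 2*n+3 from by omega, show 2*n+2-1 = 2*n+1 from by omega,
    show 2-1 = 1 from rfl]
  push_cast
  field_simp
  ring

lemma XiJ_pos (n : ℕ) {R : ℝ} (hR : 0 < R) :
    ((n:ℝ)+2 + Real.sinh (R/2)^2/2) * XiI n R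
      < 2 * Real.sinh (R/2)^(2*n+4) * Real.cosh (R/2)^2 / Real.cosh (R/2)^(2*n+2) := by
  have hmono : StrictMonoOn (fun y : ℝ =>
      2 * Real.sinh (y/2)^(2*n+4) * Real.cosh (y/2)^2 / Real.cosh (y/2)^(2*n+2)
        - ((n:ℝ)+2 + Real.sinh (y/2)^2/2) * XiI n y) (Ici 0) := by
    refine strictMonoOn_of_deriv_pos (convex_Ici 0)
      (fun x _ => ((XiJ_hasDerivAt n x).differentiableAt.continuousAt).continuousWithinAt) ?_
    rw [interior_Ici]
    intro x hx
    rw [(XiJ_hasDerivAt n x).deriv]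
    have hx' : (0:ℝ) < x := hx
    have hs : 0 < Real.sinh (x/2) := Real.sinh_pos_iff.2 (by linarith)
    have hc : 0 < Real.cosh (x/2) := Real.cosh_pos (x/2)
    have hB : (2*(n:ℝ)+4) * Real.cosh (x/2)^2 - (2*(n:ℝ)+1) * Real.sinh (x/2)^2 - (2*(n:ℝ)+4)
        = 3 * Real.sinh (x/2)^2 := by
      linear_combination (2*(n:ℝ)+4) * Real.cosh_sq (x/2)
    rw [hB]
    have hlt := XiI_lt n hx'
    have h1 : Real.sinh (x/2) * Real.cosh (x/2) / 2 * XiI n x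
        < Real.sinh (x/2) * Real.cosh (x/2) / 2
            * (6 * Real.sinh (x/2)^(2*n+4) / Real.cosh (x/2)^(2*n+2)) :=
      mul_lt_mul_of_pos_left hlt (by positivity)
    have h2 : Real.sinh (x/2) * Real.cosh (x/2) / 2
          * (6 * Real.sinh (x/2)^(2*n+4) / Real.cosh (x/2)^(2*n+2))
        = Real.sinh (x/2)^(2*n+3) * Real.cosh (x/2)^(2*n+3) * (3 * Real.sinh (x/2)^2)
          / (Real.cosh (x/2)^(2*n+2))^2 := by
      field_simp
      ring
    rw [h2] at h1
    linarith
  have h := hmono (self_mem_Ici) (le_of_lt hR) hR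
  have h0 : 2 * Real.sinh ((0:ℝ)/2)^(2*n+4) * Real.cosh ((0:ℝ)/2)^2 / Real.cosh ((0:ℝ)/2)^(2*n+2)
      - ((n:ℝ)+2 + Real.sinh ((0:ℝ)/2)^2/2) * XiI n 0 = 0 := by
    rw [XiI_zero]
    norm_num [zero_pow (show 2*n+4 ≠ 0 by omega)]
  simp only at h
  rw [h0] at h
  linarith

lemma Xig_hasDerivAt (n : ℕ) {x : ℝ} (hx : 0 < x) :
    HasDerivAt (fun y : ℝ =>
      ((n:ℝ)+1)^2/2 * Real.sinh (y/2)^(2*n+4) / (Real.cosh (y/2)^(2*n+3) * XiI n y))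
      ( ((n:ℝ)+1)^2/2 * Real.sinh (x/2)^(2*n+3) * Real.cosh (x/2)^(2*n+2) *
          ( (((n:ℝ)+2) * Real.cosh (x/2)^2 - (2*(n:ℝ)+3) * Real.sinh (x/2)^2/2) * XiI n x
            - 2 * Real.sinh (x/2)^(2*n+4) * Real.cosh (x/2)^2 / Real.cosh (x/2)^(2*n+2) )
        / (Real.cosh (x/2)^(2*n+3) * XiI n x)^2 ) x := by
  have hc := Real.cosh_pos (x/2)
  have hI := XiI_pos n hx
  have h1 := ((hasDerivAt_sinh_half x).pow (2*n+4)).const_mul (((n:ℝ)+1)^2/2)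
  have h2 := ((hasDerivAt_cosh_half x).pow (2*n+3)).mul (XiI_hasDerivAt n x)
  refine (h1.div h2 (by exact (mul_pos (pow_pos hc _) hI).ne')).congr_deriv ?_
  simp only [Pi.pow_apply, Pi.mul_apply]
  rw [xi_integrand_eq]
  simp only [show 2*n+4-1 = 2*n+3 from by omega, show 2*n+3-1 = 2*n+2 from by omega]
  push_cast
  field_simp
  ring

theorem xi_sinh_half_cubed_strictAnti (m : ℕ) (hm : 1 ≤ m) :
    StrictAntiOn
      (fun R : ℝ =>
        ((m : ℝ)^2 * Real.tanh (R/2)^(2*m) /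
          (Real.sinh R * ∫ r in (0:ℝ)..R, Real.tanh (r/2)^(2*m) * Real.sinh r)) *
            Real.sinh (R/2)^3)
      (Set.Ioi 0) := by
  obtain ⟨n, rfl⟩ : ∃ n, m = n + 1 := ⟨m - 1, (Nat.succ_pred_eq_of_pos hm).symm⟩
  have hanti : StrictAntiOn (fun y : ℝ =>
      ((n:ℝ)+1)^2/2 * Real.sinh (y/2)^(2*n+4) / (Real.cosh (y/2)^(2*n+3) * XiI n y))
      (Ioi 0) := by
    refine strictAntiOn_of_deriv_neg (convex_Ioi 0)
      (fun x hx => ((Xig_hasDerivAt n hx).differentiableAt.continuousAt).continuousWithinAt) ?_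
    rw [interior_Ioi]
    intro x hx
    rw [(Xig_hasDerivAt n hx).deriv]
    have hx' : (0:ℝ) < x := hx
    have hs : 0 < Real.sinh (x/2) := Real.sinh_pos_iff.2 (by linarith)
    have hc : 0 < Real.cosh (x/2) := Real.cosh_pos (x/2)
    have hI := XiI_pos n hx'
    have hA : (((n:ℝ)+2) * Real.cosh (x/2)^2 - (2*(n:ℝ)+3) * Real.sinh (x/2)^2/2)
        = (n:ℝ)+2 + Real.sinh (x/2)^2/2 := by
      linear_combination ((n:ℝ)+2) * Real.cosh_sq (x/2)
    rw [hA]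
    have hJ := XiJ_pos n hx'
    apply div_neg_of_neg_of_pos
    · exact mul_neg_of_pos_of_neg (by positivity) (by linarith)
    · positivity
  refine hanti.congr ?_
  intro R hR
  have hR' : (0:ℝ) < R := hR
  have hs : 0 < Real.sinh (R/2) := Real.sinh_pos_iff.2 (by linarith)
  have hc : 0 < Real.cosh (R/2) := Real.cosh_pos (R/2)
  have hI := XiI_pos n hR'
  simp only [show 2*(n+1) = 2*n+2 from by ring]
  unfold XiI at hI ⊢
  rw [Real.tanh_eq_sinh_div_cosh, xi_sinh_eq R, div_pow]
  push_cast
  field_simp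
  ring
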